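/- For every n ≥ 0, the k-linear maps Φ_n := R_{2n+1,2n+2} ∘ (R_{2n−1,2n} ∘ R_{2n,2n+1}) ∘ ⋯ ∘ (R_{1,2} ∘ R_{2,3} ∘ ⋯ ∘ R_{n+1,n+2}) : B^{⊗(n+1)} ⊗ A^{⊗(n+1)} → (A ⊗ B)^{⊗(n+1)} and Ψ_n := R⁻¹_{n+1,n+2} ∘ (R⁻¹_{n,n+1} ∘ R⁻¹_{n+2,n+3}) ∘ ⋯ ∘ (R⁻¹_{1,2} ∘ R⁻¹_{3,4} ∘ ⋯ ∘ R⁻¹_{2n+1,2n+2}) : (A ⊗ B)^{⊗(n+1)} → B^{⊗(n+1)} ⊗ A^{⊗(n+1)} are mutually inverse linear isomorphisms: Φ_n ∘ Ψ_n = id and Ψ_n ∘ Φ_n = id. Here the 2n+2 tensor factors of B^{⊗(n+1)} ⊗ A^{⊗(n+1)} are ordered b₀,…,b_n,a₀,…,a_n, those of (A ⊗ B)^{⊗(n+1)} are ordered a₀,b₀,a₁,b₁,…,a_n,b_n, and a subscript (i,i+1) means the map is applied to the i-th and (i+1)-th tensor factors and the identity elsewhere. -/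

import Mathlib

open TensorProduct

/-- A linear map `R : B ⊗ A → A ⊗ B` is *quasitriangular* if
`R∘(m_B ⊗ id_A) = (id_A ⊗ m_B)∘(R ⊗ id_B)∘(id_B ⊗ R)` and
`R∘(id_B ⊗ m_A) = (m_A ⊗ id_B)∘(id_A ⊗ R)∘(R ⊗ id_A)`,
with the evident associators inserted. -/
def Quasitriangular (k A B : Type) [Field k] [Ring A] [Algebra k A] [Ring B] [Algebra k B]
    (R : B ⊗[k] A →ₗ[k] A ⊗[k] B) : Prop :=
  (R ∘ₗ LinearMap.rTensor A (LinearMap.mul' k B)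
      = LinearMap.lTensor A (LinearMap.mul' k B)
        ∘ₗ (TensorProduct.assoc k A B B).toLinearMap
        ∘ₗ LinearMap.rTensor B R
        ∘ₗ (TensorProduct.assoc k B A B).symm.toLinearMap
        ∘ₗ LinearMap.lTensor B R
        ∘ₗ (TensorProduct.assoc k B B A).toLinearMap)
  ∧ (R ∘ₗ LinearMap.lTensor B (LinearMap.mul' k A)
      = LinearMap.rTensor B (LinearMap.mul' k A)
        ∘ₗ (TensorProduct.assoc k A A B).symm.toLinearMap
        ∘ₗ LinearMap.lTensor A R
        ∘ₗ (TensorProduct.assoc k A B A).toLinearMap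
        ∘ₗ LinearMap.rTensor A R
        ∘ₗ (TensorProduct.assoc k B A A).symm.toLinearMap)

/-- A linear map `R : B ⊗ A → A ⊗ B` is *normal* if `R(1_B ⊗ a) = a ⊗ 1_B` and
`R(b ⊗ 1_A) = 1_A ⊗ b`. -/
def RNormal (k A B : Type) [Field k] [Ring A] [Algebra k A] [Ring B] [Algebra k B]
    (R : B ⊗[k] A →ₗ[k] A ⊗[k] B) : Prop :=
  (∀ a : A, R ((1 : B) ⊗ₜ[k] a) = a ⊗ₜ[k] (1 : B))
  ∧ (∀ b : B, R (b ⊗ₜ[k] (1 : A)) = (1 : A) ⊗ₜ[k] b)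

variable (k : Type) [Field k]

/-- `Tpow k M n` is the `(n+1)`-fold tensor power `M ⊗ M ⊗ ⋯ ⊗ M`. -/
noncomputable def Tpow (M : ModuleCat.{0} k) : ℕ → ModuleCat.{0} k
  | 0 => M
  | (n+1) => ModuleCat.of k (↥M ⊗[k] ↥(Tpow M n))

/-- moving the last tensor factor out: `M^{⊗(n+2)} ≃ M^{⊗(n+1)} ⊗ M`. -/
noncomputable def ePow (M : ModuleCat.{0} k) : ∀ n : ℕ,
    (↥(Tpow k M (n+1)) ≃ₗ[k] ↥(Tpow k M n) ⊗[k] ↥M)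
  | 0 => LinearEquiv.refl k (↥M ⊗[k] ↥M)
  | (n+1) => (TensorProduct.congr (LinearEquiv.refl k ↥M) (ePow M n)).trans
      (TensorProduct.assoc k ↥M ↥(Tpow k M n) ↥M).symm

variable (A B : Type) [Ring A] [Algebra k A] [Ring B] [Algebra k B]

/-- The `(q+1)`-fold tensor power of `A`. -/
noncomputable abbrev TA (q : ℕ) : Type := ↥(Tpow k (ModuleCat.of k A) q)
/-- The `(p+1)`-fold tensor power of `B`. -/
noncomputable abbrev TB (p : ℕ) : Type := ↥(Tpow k (ModuleCat.of k B) p)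

variable {k A B}

/-- `Θ_q = R_{q+1,q+2} ∘ ⋯ ∘ R_{2,3} ∘ R_{1,2} : B ⊗ A^{⊗(q+1)} → A^{⊗(q+1)} ⊗ B`. -/
noncomputable def Theta (R : B ⊗[k] A →ₗ[k] A ⊗[k] B) :
    ∀ q : ℕ, (B ⊗[k] TA k A q) →ₗ[k] (TA k A q ⊗[k] B)
  | 0 => R
  | (q+1) =>
      (TensorProduct.assoc k A (TA k A q) B).symm.toLinearMap
      ∘ₗ LinearMap.lTensor A (Theta R q)
      ∘ₗ (TensorProduct.assoc k A B (TA k A q)).toLinearMap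
      ∘ₗ LinearMap.rTensor (TA k A q) R
      ∘ₗ (TensorProduct.assoc k B A (TA k A q)).symm.toLinearMap

/-- `Γ_p = R⁻¹_{p+1,p+2} ∘ ⋯ ∘ R⁻¹_{2,3} ∘ R⁻¹_{1,2} : A ⊗ B^{⊗(p+1)} → B^{⊗(p+1)} ⊗ A`. -/
noncomputable def Gamma (Ri : A ⊗[k] B →ₗ[k] B ⊗[k] A) :
    ∀ p : ℕ, (A ⊗[k] TB k B p) →ₗ[k] (TB k B p ⊗[k] A)
  | 0 => Ri
  | (p+1) =>
      (TensorProduct.assoc k B (TB k B p) A).symm.toLinearMap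
      ∘ₗ LinearMap.lTensor B (Gamma Ri p)
      ∘ₗ (TensorProduct.assoc k B A (TB k B p)).toLinearMap
      ∘ₗ LinearMap.rTensor (TB k B p) Ri
      ∘ₗ (TensorProduct.assoc k A B (TB k B p)).symm.toLinearMap

/-- The paracyclic operator `t_{p,q} = σ ∘ (id_B^{⊗p} ⊗ Θ_q)` on `B^{⊗(p+1)} ⊗ A^{⊗(q+1)}`,
where `σ` cyclically moves the last tensor factor (which lies in `B`) to the front. -/
noncomputable def tOp (R : B ⊗[k] A →ₗ[k] A ⊗[k] B) :
    ∀ (p q : ℕ), (TB k B p ⊗[k] TA k A q) →ₗ[k] (TB k B p ⊗[k] TA k A q)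
  | 0, q => (TensorProduct.comm k (TA k A q) B).toLinearMap ∘ₗ Theta R q
  | (p+1), q =>
      (TensorProduct.assoc k B (TB k B p) (TA k A q)).symm.toLinearMap
      ∘ₗ (TensorProduct.comm k (TB k B p ⊗[k] TA k A q) B).toLinearMap
      ∘ₗ (TensorProduct.assoc k (TB k B p) (TA k A q) B).symm.toLinearMap
      ∘ₗ LinearMap.lTensor (TB k B p) (Theta R q)
      ∘ₗ (TensorProduct.assoc k (TB k B p) B (TA k A q)).toLinearMap
      ∘ₗ LinearMap.rTensor (TA k A q) (ePow k (ModuleCat.of k B) p).toLinearMap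

/-- The paracyclic operator `t̄_{p,q}` on `B^{⊗(p+1)} ⊗ A^{⊗(q+1)}`, given by
`t̄(b₀⊗⋯⊗b_p⊗a₀⊗⋯⊗a_q) = Γ_p(a_q ⊗ b₀⊗⋯⊗b_p) ⊗ a₀⊗⋯⊗a_{q−1}`. -/
noncomputable def tbarOp (Ri : A ⊗[k] B →ₗ[k] B ⊗[k] A) :
    ∀ (p q : ℕ), (TB k B p ⊗[k] TA k A q) →ₗ[k] (TB k B p ⊗[k] TA k A q)
  | p, 0 => Gamma Ri p ∘ₗ (TensorProduct.comm k (TB k B p) A).toLinearMap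
  | p, (q+1) =>
      (TensorProduct.assoc k (TB k B p) A (TA k A q)).toLinearMap
      ∘ₗ LinearMap.rTensor (TA k A q) (Gamma Ri p)
      ∘ₗ (TensorProduct.assoc k A (TB k B p) (TA k A q)).symm.toLinearMap
      ∘ₗ (TensorProduct.comm k (TB k B p ⊗[k] TA k A q) A).toLinearMap
      ∘ₗ (TensorProduct.assoc k (TB k B p) (TA k A q) A).symm.toLinearMap
      ∘ₗ LinearMap.lTensor (TB k B p) (ePow k (ModuleCat.of k A) q).toLinearMap

/-- The `(n+1)`-fold tensor power of `A ⊗ B`. -/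
noncomputable abbrev TAB (k A B : Type) [Field k] [Ring A] [Algebra k A] [Ring B] [Algebra k B]
    (n : ℕ) : Type := ↥(Tpow k (ModuleCat.of k (A ⊗[k] B)) n)

/-- `R_{1,2} ∘ R_{2,3} ∘ ⋯ ∘ R_{p+1,p+2} : B^{⊗(p+1)} ⊗ A → A ⊗ B^{⊗(p+1)}`, pulling the
`A`-factor from the right end to the left end through `R`. -/
noncomputable def Xi {k A B : Type} [Field k] [Ring A] [Algebra k A] [Ring B] [Algebra k B]
    (R : B ⊗[k] A →ₗ[k] A ⊗[k] B) :
    ∀ p : ℕ, (TB k B p ⊗[k] A) →ₗ[k] (A ⊗[k] TB k B p)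
  | 0 => R
  | (p+1) =>
      (TensorProduct.assoc k A B (TB k B p)).toLinearMap
      ∘ₗ LinearMap.rTensor (TB k B p) R
      ∘ₗ (TensorProduct.assoc k B A (TB k B p)).symm.toLinearMap
      ∘ₗ LinearMap.lTensor B (Xi R p)
      ∘ₗ (TensorProduct.assoc k B (TB k B p) A).toLinearMap

/-- `Φ_n = R_{2n+1,2n+2}(R_{2n−1,2n}R_{2n,2n+1})⋯(R_{1,2}R_{2,3}⋯R_{n+1,n+2}) :
B^{⊗(n+1)} ⊗ A^{⊗(n+1)} → (A ⊗ B)^{⊗(n+1)}`. -/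
noncomputable def Phi {k A B : Type} [Field k] [Ring A] [Algebra k A] [Ring B] [Algebra k B]
    (R : B ⊗[k] A →ₗ[k] A ⊗[k] B) :
    ∀ n : ℕ, (TB k B n ⊗[k] TA k A n) →ₗ[k] TAB k A B n
  | 0 => R
  | (p+1) =>
      LinearMap.lTensor (A ⊗[k] B) (Phi R p)
      ∘ₗ (TensorProduct.assoc k A B (TB k B p ⊗[k] TA k A p)).symm.toLinearMap
      ∘ₗ LinearMap.lTensor A (TensorProduct.assoc k B (TB k B p) (TA k A p)).toLinearMap
      ∘ₗ (TensorProduct.assoc k A (TB k B (p+1)) (TA k A p)).toLinearMap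
      ∘ₗ LinearMap.rTensor (TA k A p) (Xi R (p+1))
      ∘ₗ (TensorProduct.assoc k (TB k B (p+1)) A (TA k A p)).symm.toLinearMap

/-- `Ψ_n = R⁻¹_{n+1,n+2}(R⁻¹_{n,n+1}R⁻¹_{n+2,n+3})⋯(R⁻¹_{1,2}R⁻¹_{3,4}⋯R⁻¹_{2n+1,2n+2}) :
(A ⊗ B)^{⊗(n+1)} → B^{⊗(n+1)} ⊗ A^{⊗(n+1)}`. -/
noncomputable def Psi {k A B : Type} [Field k] [Ring A] [Algebra k A] [Ring B] [Algebra k B]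
    (Ri : A ⊗[k] B →ₗ[k] B ⊗[k] A) :
    ∀ n : ℕ, TAB k A B n →ₗ[k] (TB k B n ⊗[k] TA k A n)
  | 0 => Ri
  | (p+1) =>
      (TensorProduct.assoc k B (TB k B p) (A ⊗[k] TA k A p)).symm.toLinearMap
      ∘ₗ LinearMap.lTensor B (TensorProduct.assoc k (TB k B p) A (TA k A p)).toLinearMap
      ∘ₗ LinearMap.lTensor B (LinearMap.rTensor (TA k A p) (Gamma Ri p))
      ∘ₗ LinearMap.lTensor B (TensorProduct.assoc k A (TB k B p) (TA k A p)).symm.toLinearMap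
      ∘ₗ (TensorProduct.assoc k B A (TB k B p ⊗[k] TA k A p)).toLinearMap
      ∘ₗ LinearMap.rTensor (TB k B p ⊗[k] TA k A p) Ri
      ∘ₗ LinearMap.lTensor (A ⊗[k] B) (Psi Ri p)


section AuxCancel

variable {K : Type} [CommSemiring K] {M N P Q : Type} [AddCommMonoid M] [AddCommMonoid N]
  [AddCommMonoid P] [AddCommMonoid Q] [Module K M] [Module K N] [Module K P] [Module K Q]

lemma cancA (e : M ≃ₗ[K] N) (f : P →ₗ[K] M) :
    e.symm.toLinearMap ∘ₗ (e.toLinearMap ∘ₗ f) = f := by ext x; simp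

lemma cancB (e : M ≃ₗ[K] N) (f : P →ₗ[K] N) :
    e.toLinearMap ∘ₗ (e.symm.toLinearMap ∘ₗ f) = f := by ext x; simp

lemma cancA' (e : M ≃ₗ[K] N) : e.symm.toLinearMap ∘ₗ e.toLinearMap = LinearMap.id := by
  ext x; simp

lemma cancB' (e : M ≃ₗ[K] N) : e.toLinearMap ∘ₗ e.symm.toLinearMap = LinearMap.id := by
  ext x; simp

lemma rTc {f : M →ₗ[K] N} {g : N →ₗ[K] M} (h : g ∘ₗ f = LinearMap.id)
    (f' : Q →ₗ[K] M ⊗[K] P) :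
    LinearMap.rTensor P g ∘ₗ (LinearMap.rTensor P f ∘ₗ f') = f' := by
  rw [← LinearMap.comp_assoc, ← LinearMap.rTensor_comp, h, LinearMap.rTensor_id,
    LinearMap.id_comp]

lemma rTc' {f : M →ₗ[K] N} {g : N →ₗ[K] M} (h : g ∘ₗ f = LinearMap.id) :
    LinearMap.rTensor P g ∘ₗ LinearMap.rTensor P f = LinearMap.id := by
  rw [← LinearMap.rTensor_comp, h, LinearMap.rTensor_id]

lemma lTc {f : M →ₗ[K] N} {g : N →ₗ[K] M} (h : g ∘ₗ f = LinearMap.id)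
    (f' : Q →ₗ[K] P ⊗[K] M) :
    LinearMap.lTensor P g ∘ₗ (LinearMap.lTensor P f ∘ₗ f') = f' := by
  rw [← LinearMap.comp_assoc, ← LinearMap.lTensor_comp, h, LinearMap.lTensor_id,
    LinearMap.id_comp]

lemma lTc' {f : M →ₗ[K] N} {g : N →ₗ[K] M} (h : g ∘ₗ f = LinearMap.id) :
    LinearMap.lTensor P g ∘ₗ LinearMap.lTensor P f = LinearMap.id := by
  rw [← LinearMap.lTensor_comp, h, LinearMap.lTensor_id]

lemma chain5 {T0 T1 T2 T3 T4 T5 : Type} [AddCommMonoid T0] [AddCommMonoid T1]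
    [AddCommMonoid T2] [AddCommMonoid T3] [AddCommMonoid T4] [AddCommMonoid T5]
    [Module K T0] [Module K T1] [Module K T2] [Module K T3] [Module K T4] [Module K T5]
    {a1 : T1 →ₗ[K] T0} {a2 : T2 →ₗ[K] T1} {a3 : T3 →ₗ[K] T2} {a4 : T4 →ₗ[K] T3}
    {a5 : T5 →ₗ[K] T4}
    {b1 : T0 →ₗ[K] T1} {b2 : T1 →ₗ[K] T2} {b3 : T2 →ₗ[K] T3} {b4 : T3 →ₗ[K] T4}
    {b5 : T4 →ₗ[K] T5}
    (h1 : a1 ∘ₗ b1 = LinearMap.id) (h2 : a2 ∘ₗ b2 = LinearMap.id)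
    (h3 : a3 ∘ₗ b3 = LinearMap.id) (h4 : a4 ∘ₗ b4 = LinearMap.id)
    (h5 : a5 ∘ₗ b5 = LinearMap.id) :
    (a1 ∘ₗ a2 ∘ₗ a3 ∘ₗ a4 ∘ₗ a5) ∘ₗ (b5 ∘ₗ b4 ∘ₗ b3 ∘ₗ b2 ∘ₗ b1) = LinearMap.id := by
  rw [LinearMap.ext_iff] at h1 h2 h3 h4 h5
  refine LinearMap.ext fun x => ?_
  simp only [LinearMap.comp_apply, LinearMap.id_apply] at *
  simp only [*]

lemma chain6 {T0 T1 T2 T3 T4 T5 T6 : Type} [AddCommMonoid T0] [AddCommMonoid T1]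
    [AddCommMonoid T2] [AddCommMonoid T3] [AddCommMonoid T4] [AddCommMonoid T5]
    [AddCommMonoid T6]
    [Module K T0] [Module K T1] [Module K T2] [Module K T3] [Module K T4] [Module K T5]
    [Module K T6]
    {a1 : T1 →ₗ[K] T0} {a2 : T2 →ₗ[K] T1} {a3 : T3 →ₗ[K] T2} {a4 : T4 →ₗ[K] T3}
    {a5 : T5 →ₗ[K] T4} {a6 : T6 →ₗ[K] T5}
    {b1 : T0 →ₗ[K] T1} {b2 : T1 →ₗ[K] T2} {b3 : T2 →ₗ[K] T3} {b4 : T3 →ₗ[K] T4}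
    {b5 : T4 →ₗ[K] T5} {b6 : T5 →ₗ[K] T6}
    (h1 : a1 ∘ₗ b1 = LinearMap.id) (h2 : a2 ∘ₗ b2 = LinearMap.id)
    (h3 : a3 ∘ₗ b3 = LinearMap.id) (h4 : a4 ∘ₗ b4 = LinearMap.id)
    (h5 : a5 ∘ₗ b5 = LinearMap.id) (h6 : a6 ∘ₗ b6 = LinearMap.id) :
    (a1 ∘ₗ a2 ∘ₗ a3 ∘ₗ a4 ∘ₗ a5 ∘ₗ a6) ∘ₗ (b6 ∘ₗ b5 ∘ₗ b4 ∘ₗ b3 ∘ₗ b2 ∘ₗ b1)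
      = LinearMap.id := by
  rw [LinearMap.ext_iff] at h1 h2 h3 h4 h5 h6
  refine LinearMap.ext fun x => ?_
  simp only [LinearMap.comp_apply, LinearMap.id_apply] at *
  simp only [*]

end AuxCancel

/-- `Γ_p` (built from `R⁻¹`) is a two-sided inverse of `Ξ_p`. -/
lemma XiGamma (R : B ⊗[k] A ≃ₗ[k] A ⊗[k] B) :
    ∀ p : ℕ, Gamma R.symm.toLinearMap p ∘ₗ Xi R.toLinearMap p = LinearMap.id
      ∧ Xi R.toLinearMap p ∘ₗ Gamma R.symm.toLinearMap p = LinearMap.id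
  | 0 => ⟨by simp only [Gamma, Xi]; exact cancA' R, by simp only [Gamma, Xi]; exact cancB' R⟩
  | (p+1) => by
    obtain ⟨ih1, ih2⟩ := XiGamma R p
    constructor
    · rw [Gamma, Xi]
      exact chain5 (cancA' (TensorProduct.assoc k B (TB k B p) A)) (lTc' ih1)
        (cancB' (TensorProduct.assoc k B A (TB k B p))) (rTc' (cancA' R))
        (cancA' (TensorProduct.assoc k A B (TB k B p)))
    · rw [Gamma, Xi]
      exact chain5 (cancB' (TensorProduct.assoc k A B (TB k B p))) (rTc' (cancB' R))
        (cancA' (TensorProduct.assoc k B A (TB k B p))) (lTc' ih2)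
        (cancB' (TensorProduct.assoc k B (TB k B p) A))

set_option maxHeartbeats 1000000 in
lemma psiTail_eq' (Ri : A ⊗[k] B →ₗ[k] B ⊗[k] A) (p : ℕ) :
    (TensorProduct.assoc k B (TB k B p) (A ⊗[k] TA k A p)).symm.toLinearMap
      ∘ₗ LinearMap.lTensor B (TensorProduct.assoc k (TB k B p) A (TA k A p)).toLinearMap
      ∘ₗ LinearMap.lTensor B (LinearMap.rTensor (TA k A p) (Gamma Ri p))
      ∘ₗ LinearMap.lTensor B (TensorProduct.assoc k A (TB k B p) (TA k A p)).symm.toLinearMap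
      ∘ₗ (TensorProduct.assoc k B A (TB k B p ⊗[k] TA k A p)).toLinearMap
      ∘ₗ LinearMap.rTensor (TB k B p ⊗[k] TA k A p) Ri
    = (TensorProduct.assoc k (B ⊗[k] TB k B p) A (TA k A p)).toLinearMap
      ∘ₗ LinearMap.rTensor (TA k A p)
          ((TensorProduct.assoc k B (TB k B p) A).symm.toLinearMap
            ∘ₗ LinearMap.lTensor B (Gamma Ri p)
            ∘ₗ (TensorProduct.assoc k B A (TB k B p)).toLinearMap
            ∘ₗ LinearMap.rTensor (TB k B p) Ri
            ∘ₗ (TensorProduct.assoc k A B (TB k B p)).symm.toLinearMap)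
      ∘ₗ (TensorProduct.assoc k A (B ⊗[k] TB k B p) (TA k A p)).symm.toLinearMap
      ∘ₗ LinearMap.lTensor A (TensorProduct.assoc k B (TB k B p) (TA k A p)).symm.toLinearMap
      ∘ₗ (TensorProduct.assoc k A B (TB k B p ⊗[k] TA k A p)).toLinearMap := by
  refine TensorProduct.ext' fun x y => ?_
  induction x using TensorProduct.induction_on with
  | zero => simp only [zero_tmul, tmul_zero, map_zero]
  | add x₁ x₂ h1 h2 => simp only [add_tmul, map_add, h1, h2]
  | tmul a b =>
    induction y using TensorProduct.induction_on with
    | zero => simp only [zero_tmul, tmul_zero, map_zero]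
    | add y₁ y₂ h1 h2 => simp only [tmul_add, map_add, h1, h2]
    | tmul t s =>
      simp only [LinearMap.comp_apply, LinearEquiv.coe_coe, TensorProduct.assoc_tmul,
        TensorProduct.assoc_symm_tmul, LinearMap.lTensor_tmul, LinearMap.rTensor_tmul]
      generalize Ri (a ⊗ₜ[k] b) = z
      induction z using TensorProduct.induction_on with
      | zero => simp only [zero_tmul, tmul_zero, map_zero]
      | add z₁ z₂ h1 h2 => simp only [add_tmul, tmul_add, map_add, h1, h2]
      | tmul b' a' =>
        simp only [LinearMap.comp_apply, LinearEquiv.coe_coe, TensorProduct.assoc_tmul,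
          TensorProduct.assoc_symm_tmul, LinearMap.lTensor_tmul, LinearMap.rTensor_tmul]
        generalize Gamma Ri p (a' ⊗ₜ[k] t) = w
        induction w using TensorProduct.induction_on with
        | zero => simp only [zero_tmul, tmul_zero, map_zero]
        | add w₁ w₂ h1 h2 => simp only [add_tmul, tmul_add, map_add, h1, h2]
        | tmul t' a'' =>
          simp only [LinearMap.comp_apply, LinearEquiv.coe_coe, TensorProduct.assoc_tmul,
            TensorProduct.assoc_symm_tmul, LinearMap.lTensor_tmul, LinearMap.rTensor_tmul]

lemma psiTail_eq (Ri : A ⊗[k] B →ₗ[k] B ⊗[k] A) (p : ℕ) :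
    (TensorProduct.assoc k B (TB k B p) (A ⊗[k] TA k A p)).symm.toLinearMap
      ∘ₗ LinearMap.lTensor B (TensorProduct.assoc k (TB k B p) A (TA k A p)).toLinearMap
      ∘ₗ LinearMap.lTensor B (LinearMap.rTensor (TA k A p) (Gamma Ri p))
      ∘ₗ LinearMap.lTensor B (TensorProduct.assoc k A (TB k B p) (TA k A p)).symm.toLinearMap
      ∘ₗ (TensorProduct.assoc k B A (TB k B p ⊗[k] TA k A p)).toLinearMap
      ∘ₗ LinearMap.rTensor (TB k B p ⊗[k] TA k A p) Ri
    = (TensorProduct.assoc k (TB k B (p+1)) A (TA k A p)).toLinearMap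
      ∘ₗ LinearMap.rTensor (TA k A p) (Gamma Ri (p+1))
      ∘ₗ (TensorProduct.assoc k A (TB k B (p+1)) (TA k A p)).symm.toLinearMap
      ∘ₗ LinearMap.lTensor A (TensorProduct.assoc k B (TB k B p) (TA k A p)).symm.toLinearMap
      ∘ₗ (TensorProduct.assoc k A B (TB k B p ⊗[k] TA k A p)).toLinearMap :=
  psiTail_eq' Ri p

lemma psiTail_eq_comp (Ri : A ⊗[k] B →ₗ[k] B ⊗[k] A) (p : ℕ)
    {Q : Type} [AddCommGroup Q] [Module k Q]
    (f : Q →ₗ[k] (A ⊗[k] B) ⊗[k] (TB k B p ⊗[k] TA k A p)) :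
    (TensorProduct.assoc k B (TB k B p) (A ⊗[k] TA k A p)).symm.toLinearMap
      ∘ₗ (LinearMap.lTensor B (TensorProduct.assoc k (TB k B p) A (TA k A p)).toLinearMap
      ∘ₗ (LinearMap.lTensor B (LinearMap.rTensor (TA k A p) (Gamma Ri p))
      ∘ₗ (LinearMap.lTensor B (TensorProduct.assoc k A (TB k B p) (TA k A p)).symm.toLinearMap
      ∘ₗ ((TensorProduct.assoc k B A (TB k B p ⊗[k] TA k A p)).toLinearMap
      ∘ₗ (LinearMap.rTensor (TB k B p ⊗[k] TA k A p) Ri ∘ₗ f)))))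
    = (TensorProduct.assoc k (TB k B (p+1)) A (TA k A p)).toLinearMap
      ∘ₗ (LinearMap.rTensor (TA k A p) (Gamma Ri (p+1))
      ∘ₗ ((TensorProduct.assoc k A (TB k B (p+1)) (TA k A p)).symm.toLinearMap
      ∘ₗ (LinearMap.lTensor A (TensorProduct.assoc k B (TB k B p) (TA k A p)).symm.toLinearMap
      ∘ₗ ((TensorProduct.assoc k A B (TB k B p ⊗[k] TA k A p)).toLinearMap ∘ₗ f)))) := by
  exact LinearMap.ext fun x => LinearMap.congr_fun (psiTail_eq Ri p) (f x)

lemma Psi_succ (Ri : A ⊗[k] B →ₗ[k] B ⊗[k] A) (p : ℕ) :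
    Psi Ri (p+1) = (TensorProduct.assoc k (TB k B (p+1)) A (TA k A p)).toLinearMap
        ∘ₗ LinearMap.rTensor (TA k A p) (Gamma Ri (p+1))
        ∘ₗ (TensorProduct.assoc k A (TB k B (p+1)) (TA k A p)).symm.toLinearMap
        ∘ₗ LinearMap.lTensor A (TensorProduct.assoc k B (TB k B p) (TA k A p)).symm.toLinearMap
        ∘ₗ (TensorProduct.assoc k A B (TB k B p ⊗[k] TA k A p)).toLinearMap
        ∘ₗ LinearMap.lTensor (A ⊗[k] B) (Psi Ri p) := by
  rw [Psi]
  exact LinearMap.ext fun x =>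
    LinearMap.congr_fun (psiTail_eq Ri p) (LinearMap.lTensor (A ⊗[k] B) (Psi Ri p) x)

theorem Phi_Psi_inverse'
    (R : B ⊗[k] A ≃ₗ[k] A ⊗[k] B) :
    ∀ n : ℕ, Phi R.toLinearMap n ∘ₗ Psi R.symm.toLinearMap n = LinearMap.id
    ∧ Psi R.symm.toLinearMap n ∘ₗ Phi R.toLinearMap n = LinearMap.id
  | 0 => by
    constructor
    · simp only [Phi, Psi]; exact cancB' R
    · simp only [Phi, Psi]; exact cancA' R
  | (p+1) => by
    obtain ⟨ih1, ih2⟩ := Phi_Psi_inverse' R p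
    obtain ⟨hXG1, hXG2⟩ := XiGamma R (p+1)
    constructor
    · rw [Psi_succ, Phi]
      exact chain6 (lTc' ih1) (cancA' (TensorProduct.assoc k A B (TB k B p ⊗[k] TA k A p)))
        (lTc' (cancB' (TensorProduct.assoc k B (TB k B p) (TA k A p))))
        (cancB' (TensorProduct.assoc k A (TB k B (p+1)) (TA k A p))) (rTc' hXG2)
        (cancA' (TensorProduct.assoc k (TB k B (p+1)) A (TA k A p)))
    · rw [Psi_succ, Phi]
      exact chain6 (cancB' (TensorProduct.assoc k (TB k B (p+1)) A (TA k A p))) (rTc' hXG1)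
        (cancA' (TensorProduct.assoc k A (TB k B (p+1)) (TA k A p)))
        (lTc' (cancA' (TensorProduct.assoc k B (TB k B p) (TA k A p))))
        (cancB' (TensorProduct.assoc k A B (TB k B p ⊗[k] TA k A p))) (lTc' ih2)

/-- `Φ_n` and `Ψ_n` are mutually inverse linear isomorphisms between
`B^{⊗(n+1)} ⊗ A^{⊗(n+1)}` and `(A ⊗ B)^{⊗(n+1)}`. -/
theorem Phi_Psi_inverse
    (k A B : Type) [Field k] [Ring A] [Algebra k A] [Ring B] [Algebra k B]
    (R : B ⊗[k] A ≃ₗ[k] A ⊗[k] B)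
    (hqt : Quasitriangular k A B R.toLinearMap)
    (hn : RNormal k A B R.toLinearMap)
    (n : ℕ) :
    Phi R.toLinearMap n ∘ₗ Psi R.symm.toLinearMap n = LinearMap.id
    ∧ Psi R.symm.toLinearMap n ∘ₗ Phi R.toLinearMap n = LinearMap.id := by
  exact Phi_Psi_inverse' R n
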